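/- If F is any flat of rank k in the freedom matroid M(S_0,...,S_r), then |F| ≤ |S_k|. -/

import Mathlib

open Matroid Set

/-- The rank of a set `X` in a matroid `M`: the largest cardinality of an independent
subset of `X`. -/
noncomputable def matRk {α : Type*} (M : Matroid α) (X : Set α) : ℕ :=
  sSup {k : ℕ | ∃ I : Set α, I ⊆ X ∧ M.Indep I ∧ I.ncard = k}

/-- If `F` is any flat of rank `k` in the freedom matroid `M(S₀,…,S_r)`,
then `|F| ≤ |S_k|`. -/
theorem freedom_matroid_flat_card_le {α : Type*} (S : Set α) (hS : S.Finite) (r : ℕ)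
    (F : ℕ → Set α) (hFr : F r = S) (hchain : ∀ i < r, F i ⊂ F (i + 1))
    (M : Matroid α) (hE : M.E = S)
    (hInd : ∀ I : Set α, M.Indep I ↔ I ⊆ S ∧ ∀ i ≤ r, (I ∩ F i).ncard ≤ i)
    (Fl : Set α) (hFl : M.IsFlat Fl) (k : ℕ) (hk : k ≤ r) (hrk : matRk M Fl = k) :
    Fl.ncard ≤ (F k).ncard := by
  classical
  rcases isEmpty_or_nonempty α with hα | hα
  · have : Fl = ∅ := Set.eq_empty_of_isEmpty Fl
    simp [this]
  -- chain monotonicity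
  have hmono : ∀ b ≤ r, ∀ a ≤ b, F a ⊆ F b := by
    intro b
    induction b with
    | zero => intro _ a ha; interval_cases a; exact subset_rfl
    | succ n ih =>
      intro hbr a ha
      rcases Nat.eq_or_lt_of_le ha with h | h
      · subst h; exact subset_rfl
      · exact (ih (by omega) a (by omega)).trans (hchain n (by omega)).subset
  have hsubS : ∀ i ≤ r, F i ⊆ S := fun i hi => hFr ▸ hmono r le_rfl i hi
  have hfin : ∀ i ≤ r, (F i).Finite := fun i hi => hS.subset (hsubS i hi)
  have hcardchain : ∀ b ≤ r, ∀ a ≤ b, (F a).ncard + (b - a) ≤ (F b).ncard := by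
    intro b
    induction b with
    | zero => intro _ a ha; interval_cases a; simp
    | succ n ih =>
      intro hbr a ha
      rcases Nat.eq_or_lt_of_le ha with h | h
      · subst h; simp
      · have h1 := ih (by omega) a (by omega)
        have h2 : (F n).ncard < (F (n + 1)).ncard :=
          Set.ncard_lt_ncard (hchain n (by omega)) (hfin (n + 1) (by omega))
        omega
  have hFlS : Fl ⊆ S := hE ▸ hFl.subset_ground
  have hFlfin : Fl.Finite := hS.subset hFlS
  -- pick elements b i ∈ F (i+1) \ F i
  have hbex : ∀ i : ℕ, ∃ x : α, i < r → (x ∈ F (i + 1) ∧ x ∉ F i) := by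
    intro i
    by_cases h : i < r
    · obtain ⟨x, hx⟩ := exists_of_ssubset (hchain i h)
      exact ⟨x, fun _ => hx⟩
    · exact ⟨Classical.arbitrary α, fun hh => absurd hh h⟩
  choose b hb using hbex
  have hb1 : ∀ i, i < r → b i ∈ F (i + 1) := fun i h => (hb i h).1
  have hb2 : ∀ i, i < r → b i ∉ F i := fun i h => (hb i h).2
  -- basic facts about B j := b '' {i | i < j}
  have hBmem : ∀ j ≤ r, ∀ i < j, b i ∈ F j ∧ b i ∉ F i := by
    intro j hj i hi
    exact ⟨hmono j hj (i + 1) (by omega) (hb1 i (by omega)), hb2 i (by omega)⟩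
  have hBinter : ∀ j ≤ r, ∀ l ≤ r, (b '' {i | i < j}) ∩ F l ⊆ b '' {i | i < min j l} := by
    intro j hj l hl x hx
    obtain ⟨⟨i, hi, rfl⟩, hxl⟩ := hx
    have hij : i < j := hi
    refine ⟨i, ?_, rfl⟩
    simp only [mem_setOf_eq, lt_min_iff]
    refine ⟨hi, ?_⟩
    by_contra hli
    push_neg at hli
    exact (hBmem j hj i hi).2 (hmono i (by omega) l hli hxl)
  have hIio : ∀ m : ℕ, ({i : ℕ | i < m}).ncard = m := by
    intro m
    rw [Set.ncard_def, Set.Nat.encard_range]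
    rfl
  have hBcard : ∀ j l : ℕ, ((b '' {i | i < j}) ∩ F l).ncard ≤ min j l → True := fun _ _ _ => trivial
  have hBintercard : ∀ j ≤ r, ∀ l ≤ r, ((b '' {i | i < j}) ∩ F l).ncard ≤ min j l := by
    intro j hj l hl
    calc ((b '' {i | i < j}) ∩ F l).ncard ≤ (b '' {i | i < min j l}).ncard :=
          Set.ncard_le_ncard (hBinter j hj l hl)
            ((Set.finite_lt_nat _).image b)
      _ ≤ ({i : ℕ | i < min j l}).ncard := Set.ncard_image_le (Set.finite_lt_nat _)
      _ = min j l := hIio _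
  -- independence criterion for B j ∪ C
  have hIndBC : ∀ j ≤ r, ∀ C ⊆ Fl, (∀ l ≤ r, (C ∩ F l).ncard ≤ l - j) →
      M.Indep ((b '' {i | i < j}) ∪ C) := by
    intro j hj C hC hCl
    rw [hInd]
    constructor
    · apply Set.union_subset
      · rintro x ⟨i, hi, rfl⟩
        exact hsubS j hj (hBmem j hj i hi).1
      · exact hC.trans hFlS
    · intro l hl
      calc (((b '' {i | i < j}) ∪ C) ∩ F l).ncard
          = ((b '' {i | i < j}) ∩ F l ∪ C ∩ F l).ncard := by rw [Set.union_inter_distrib_right]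
        _ ≤ ((b '' {i | i < j}) ∩ F l).ncard + (C ∩ F l).ncard := Set.ncard_union_le _ _
        _ ≤ min j l + (l - j) := Nat.add_le_add (hBintercard j hj l hl) (hCl l hl)
        _ ≤ l := by omega
  -- the maximal index j with F j ⊆ Fl
  set P : Set ℕ := {i | i ≤ r ∧ F i ⊆ Fl} with hP
  have hIndep_empty : M.Indep ∅ := by
    rw [hInd]; simp
  have hF0 : F 0 ⊆ Fl := by
    intro x hx
    have hxS : x ∈ S := hsubS 0 (by omega) hx
    have hxcl : x ∈ M.closure ∅ := by
      rw [hIndep_empty.mem_closure_iff']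
      refine ⟨hE ▸ hxS, fun hi => ?_⟩
      exfalso
      rw [hInd] at hi
      have := hi.2 0 (by omega)
      have hxx : insert x (∅ : Set α) ∩ F 0 = {x} := by
        ext y
        simp only [Set.mem_inter_iff, Set.mem_insert_iff, Set.mem_empty_iff_false, or_false,
          Set.mem_singleton_iff]
        exact ⟨fun h => h.1, fun h => ⟨h, h ▸ hx⟩⟩
      rw [hxx] at this
      simp at this
    have := (M.closure_subset_closure (Set.empty_subset Fl)) hxcl
    rwa [hFl.closure] at this
  have hPne : P.Nonempty := ⟨0, by simp [hP], hF0⟩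
  have hPbdd : BddAbove P := ⟨r, fun i hi => hi.1⟩
  set j := sSup P with hj
  have hjmem : j ∈ P := Nat.sSup_mem hPne hPbdd
  have hjr : j ≤ r := hjmem.1
  have hjFl : F j ⊆ Fl := hjmem.2
  have hjmax : ∀ i ∈ P, i ≤ j := fun i hi => le_csSup hPbdd hi
  have hBinj : ∀ i1 < j, ∀ i2 < j, b i1 = b i2 → i1 = i2 := by
    have haux : ∀ i1 i2, i1 < i2 → i2 < j → b i1 ≠ b i2 := by
      intro i1 i2 hlt h2 he
      have hm1 : b i1 ∈ F i2 := hmono i2 (by omega) (i1 + 1) (by omega) (hb1 i1 (by omega))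
      rw [he] at hm1
      exact (hBmem j hjr i2 h2).2 hm1
    intro i1 h1 i2 h2 he
    rcases Nat.lt_trichotomy i1 i2 with h | h | h
    · exact absurd he (haux _ _ h h2)
    · exact h
    · exact absurd he.symm (haux _ _ h h1)
  -- key claim
  have key : ∀ m, m ≤ r → j ≤ m → ((Fl \ F j) ∩ F m).ncard ≤ m - j := by
    intro m
    induction m using Nat.strong_induction_on with
    | _ m ih =>
      intro hmr hjm
      rcases Nat.eq_or_lt_of_le hjm with h | h
      · have hFeq : F j = F m := by rw [h]
        have hempty : (Fl \ F j) ∩ F m = ∅ := by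
          ext x
          simp only [mem_inter_iff, mem_diff, mem_empty_iff_false, iff_false]
          rintro ⟨⟨_, hxj⟩, hxm⟩
          exact hxj (hFeq ▸ hxm)
        simp [hempty]
      by_contra hcon
      push_neg at hcon
      -- pick C of size m - j
      obtain ⟨C, hCsub, hCcard⟩ :=
        Set.exists_subset_card_eq (show m - j ≤ ((Fl \ F j) ∩ F m).ncard by omega)
      have hCFl : C ⊆ Fl := fun x hx => ((hCsub hx).1).1
      have hCFm : C ⊆ F m := fun x hx => (hCsub hx).2
      have hCnj : Disjoint C (F j) := by
        rw [Set.disjoint_left]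
        intro x hx
        exact ((hCsub hx).1).2
      have hCfin : C.Finite := hFlfin.subset hCFl
      have hCl : ∀ l ≤ r, (C ∩ F l).ncard ≤ l - j := by
        intro l hl
        rcases lt_or_ge l j with hlj | hjl
        · have : C ∩ F l = ∅ := by
            apply Set.eq_empty_of_subset_empty
            intro x hx
            exact (hCnj.le_bot ⟨hx.1, hmono j hjr l (by omega) hx.2⟩)
          simp [this]
        rcases lt_or_ge l m with hlm | hml
        · calc (C ∩ F l).ncard ≤ ((Fl \ F j) ∩ F l).ncard := by
                apply Set.ncard_le_ncard _ (((hS.subset hFlS).diff).inter_of_left _)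
                intro x hx
                exact ⟨(hCsub hx.1).1, hx.2⟩
            _ ≤ l - j := ih l hlm hl hjl
        · calc (C ∩ F l).ncard ≤ C.ncard := Set.ncard_le_ncard Set.inter_subset_left hCfin
            _ = m - j := hCcard
            _ ≤ l - j := by omega
      -- I := B j ∪ C is independent, inside Fl ∩ F m, of size m
      set I := (b '' {i | i < j}) ∪ C with hI
      have hIindep : M.Indep I := hIndBC j hjr C hCFl hCl
      have hIFl : I ⊆ Fl := by
        apply Set.union_subset _ hCFl
        rintro x ⟨i, hi, rfl⟩
        exact hjFl (hBmem j hjr i hi).1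
      have hIFm : I ⊆ F m := by
        apply Set.union_subset _ hCFm
        rintro x ⟨i, hi, rfl⟩
        exact hmono m hmr j (by omega) (hBmem j hjr i hi).1
      have hIcard : I.ncard = m := by
        rw [hI, Set.ncard_union_eq _ ((Set.finite_lt_nat _).image b) hCfin]
        · rw [Set.ncard_image_of_injOn (show Set.InjOn b {i | i < j} from fun i1 h1 i2 h2 he => hBinj i1 h1 i2 h2 he), hIio, hCcard]
          omega
        · apply Set.disjoint_left.2
          rintro x ⟨i, hi, rfl⟩ hxC
          exact (hCnj.le_bot ⟨hxC, (hBmem j hjr i hi).1⟩)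
      -- every y ∈ F m is in Fl
      have hFmFl : F m ⊆ Fl := by
        intro y hy
        by_cases hyI : y ∈ I
        · exact hIFl hyI
        have hycl : y ∈ M.closure I := by
          rw [hIindep.mem_closure_iff']
          refine ⟨hE ▸ hsubS m hmr hy, fun hins => ?_⟩
          exfalso
          rw [hInd] at hins
          have hle := hins.2 m hmr
          have : insert y I ∩ F m = insert y I := by
            rw [Set.inter_eq_left]
            exact Set.insert_subset hy hIFm
          rw [this, Set.ncard_insert_of_notMem hyI (hFlfin.subset hIFl)] at hle
          omega
        have := (M.closure_subset_closure hIFl) hycl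
        rwa [hFl.closure] at this
      have : m ≤ j := hjmax m ⟨hmr, hFmFl⟩
      omega
  -- assemble: B j ∪ (Fl \ F j) is independent in Fl
  have hDl : ∀ l ≤ r, ((Fl \ F j) ∩ F l).ncard ≤ l - j := by
    intro l hl
    rcases lt_or_ge l j with hlj | hjl
    · have : (Fl \ F j) ∩ F l = ∅ := by
        apply Set.eq_empty_of_subset_empty
        rintro x ⟨⟨_, hxj⟩, hxl⟩
        exact hxj (hmono j hjr l (by omega) hxl)
      simp [this]
    · exact key l hl hjl
  have hIndStar : M.Indep ((b '' {i | i < j}) ∪ (Fl \ F j)) :=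
    hIndBC j hjr (Fl \ F j) Set.diff_subset hDl
  have hStarFl : (b '' {i | i < j}) ∪ (Fl \ F j) ⊆ Fl := by
    apply Set.union_subset _ Set.diff_subset
    rintro x ⟨i, hi, rfl⟩
    exact hjFl (hBmem j hjr i hi).1
  have hStarcard : ((b '' {i | i < j}) ∪ (Fl \ F j)).ncard = j + (Fl \ F j).ncard := by
    rw [Set.ncard_union_eq _ ((Set.finite_lt_nat _).image b) hFlfin.diff]
    · rw [Set.ncard_image_of_injOn (show Set.InjOn b {i | i < j} from fun i1 h1 i2 h2 he => hBinj i1 h1 i2 h2 he), hIio]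
    · apply Set.disjoint_left.2
      rintro x ⟨i, hi, rfl⟩ ⟨_, hxj⟩
      exact hxj (hBmem j hjr i hi).1
  -- rank bound
  have hle : j + (Fl \ F j).ncard ≤ k := by
    rw [← hrk]
    apply le_csSup
    · refine ⟨Fl.ncard, ?_⟩
      rintro n ⟨I, hIFl', _, rfl⟩
      exact Set.ncard_le_ncard hIFl' hFlfin
    · exact ⟨_, hStarFl, hIndStar, hStarcard⟩
  have hjk : j ≤ k := le_trans (Nat.le_add_right _ _) hle
  have hFlsplit : (Fl \ F j).ncard + (F j).ncard = Fl.ncard :=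
    Set.ncard_diff_add_ncard_of_subset hjFl hFlfin
  have hjkcard : (F j).ncard + (k - j) ≤ (F k).ncard := hcardchain k hk j hjk
  omega
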